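/- For a ∈ ℝ, ε > 0 and n ≥ 1, define V_n(a,ε) := ε · v(a,ε) · Σ_{k=1}^n e^{2a(n−k)ε}, where v(a,ε) := (1/ε)∫_0^ε (e^{as} − (1/ε)∫_0^ε e^{au} du)^2 ds. If a > 0, then for every n ≥ 1, ε^2 · (a/24) · e^{−2aε} · (e^{2anε} − 1) ≤ V_n(a,ε) ≤ ε^2 · (a/24) · e^{2aε} · (e^{2anε} − 1). -/

import Mathlib

open Real

lemma nonneg_of_hasDerivAt (f f' : ℝ → ℝ) (hf : ∀ x, HasDerivAt f (f' x) x)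
    (h0 : f 0 = 0) (hd : ∀ x, 0 ≤ x → 0 ≤ f' x) : ∀ x, 0 ≤ x → 0 ≤ f x := by
  intro x hx
  have hm : MonotoneOn f (Set.Ici 0) := by
    apply monotoneOn_of_deriv_nonneg (convex_Ici 0)
    · exact fun y _ => (hf y).continuousAt.continuousWithinAt
    · exact fun y _ => (hf y).differentiableAt.differentiableWithinAt
    · intro y hy
      rw [(hf y).deriv]
      rw [interior_Ici] at hy
      exact hd y (le_of_lt hy)
  calc (0:ℝ) = f 0 := h0.symm
  _ ≤ f x := hm Set.self_mem_Ici hx hx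

lemma P1 (x : ℝ) (hx : 0 ≤ x) :
    x^4 ≤ 6*x*((Real.exp x)^2-1) - 12*(Real.exp x-1)^2 := by
  have h4 : ∀ y, 0 ≤ y → 0 ≤ 96*y*(Real.exp y)^2 + 24*Real.exp y - 24 := by
    intro y hy
    nlinarith [Real.one_le_exp hy, Real.exp_pos y, sq_nonneg (Real.exp y)]
  have h3 : ∀ y, 0 ≤ y → 0 ≤ (48*y-24)*(Real.exp y)^2 + 24*Real.exp y - 24*y := by
    apply nonneg_of_hasDerivAt _ (fun y => 96*y*(Real.exp y)^2 + 24*Real.exp y - 24)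
    · intro x
      have h := (((((hasDerivAt_id x).const_mul 48).sub_const 24).mul
          ((Real.hasDerivAt_exp x).pow 2)).add ((Real.hasDerivAt_exp x).const_mul 24)).sub
          ((hasDerivAt_id x).const_mul 24)
      refine h.congr_deriv ?_
      (try simp only [id_eq, Pi.pow_apply]); push_cast; ring
    · norm_num
    · exact h4
  have h2 : ∀ y, 0 ≤ y → 0 ≤ (24*y-24)*(Real.exp y)^2 + 24*Real.exp y - 12*y^2 := by
    apply nonneg_of_hasDerivAt _ (fun y => (48*y-24)*(Real.exp y)^2 + 24*Real.exp y - 24*y)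
    · intro x
      have h := (((((hasDerivAt_id x).const_mul 24).sub_const 24).mul
          ((Real.hasDerivAt_exp x).pow 2)).add ((Real.hasDerivAt_exp x).const_mul 24)).sub
          (((hasDerivAt_pow 2 x)).const_mul 12)
      refine h.congr_deriv ?_
      (try simp only [id_eq, Pi.pow_apply]); push_cast; ring
    · norm_num
    · exact h3
  have h1 : ∀ y, 0 ≤ y → 0 ≤ (12*y-18)*(Real.exp y)^2 + 24*Real.exp y - 6 - 4*y^3 := by
    apply nonneg_of_hasDerivAt _ (fun y => (24*y-24)*(Real.exp y)^2 + 24*Real.exp y - 12*y^2)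
    · intro x
      have h := ((((((hasDerivAt_id x).const_mul 12).sub_const 18).mul
          ((Real.hasDerivAt_exp x).pow 2)).add ((Real.hasDerivAt_exp x).const_mul 24)).sub_const 6).sub
          (((hasDerivAt_pow 3 x)).const_mul 4)
      refine h.congr_deriv ?_
      (try simp only [id_eq, Pi.pow_apply]); push_cast; ring
    · norm_num
    · exact h2
  have h0 : ∀ y, 0 ≤ y → 0 ≤ 6*y*((Real.exp y)^2-1) - 12*(Real.exp y-1)^2 - y^4 := by
    apply nonneg_of_hasDerivAt _
      (fun y => (12*y-18)*(Real.exp y)^2 + 24*Real.exp y - 6 - 4*y^3)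
    · intro x
      have h := ((((hasDerivAt_id x).const_mul 6).mul
          (((Real.hasDerivAt_exp x).pow 2).sub_const 1)).sub
          ((((Real.hasDerivAt_exp x).sub_const 1).pow 2).const_mul 12)).sub (hasDerivAt_pow 4 x)
      refine h.congr_deriv ?_
      (try simp only [id_eq, Pi.pow_apply]); push_cast; ring
    · norm_num
    · exact h1
  linarith [h0 x hx]

lemma P2 (x : ℝ) (hx : 0 ≤ x) :
    6*x*((Real.exp x)^2-1) - 12*(Real.exp x-1)^2 ≤ x^4*(Real.exp x)^2 := by
  have h4 : ∀ y, 0 ≤ y →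
      0 ≤ (16*y^4+128*y^3+288*y^2+96*y+24)*(Real.exp y)^2 - 24*Real.exp y := by
    intro y hy
    have e1 : 24*Real.exp y ≤ 24*(Real.exp y)^2 := by
      nlinarith [Real.one_le_exp hy, Real.exp_pos y]
    have e2 : 24*(Real.exp y)^2 ≤ (16*y^4+128*y^3+288*y^2+96*y+24)*(Real.exp y)^2 := by
      have hp : (0:ℝ) ≤ 16*y^4+128*y^3+288*y^2+96*y := by positivity
      nlinarith [sq_nonneg (Real.exp y)]
    linarith
  have h3 : ∀ y, 0 ≤ y →
      0 ≤ (8*y^4+48*y^3+72*y^2-24*y+24)*(Real.exp y)^2 - 24*Real.exp y := by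
    apply nonneg_of_hasDerivAt _
      (fun y => (16*y^4+128*y^3+288*y^2+96*y+24)*(Real.exp y)^2 - 24*Real.exp y)
    · intro x
      have hp : HasDerivAt (fun y : ℝ => 8*y^4+48*y^3+72*y^2-24*y+24)
          (32*x^3+144*x^2+144*x-24) x := by
        have := ((((((hasDerivAt_pow 4 x).const_mul 8).add
          ((hasDerivAt_pow 3 x).const_mul 48)).add ((hasDerivAt_pow 2 x).const_mul 72)).sub
          ((hasDerivAt_id x).const_mul 24)).add_const 24)
        refine this.congr_deriv ?_
        (try simp only [id_eq, Pi.pow_apply]); push_cast; ring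
      have h := (hp.mul ((Real.hasDerivAt_exp x).pow 2)).sub ((Real.hasDerivAt_exp x).const_mul 24)
      refine h.congr_deriv ?_
      (try simp only [id_eq, Pi.pow_apply]); push_cast; ring
    · norm_num
    · exact h4
  have h2 : ∀ y, 0 ≤ y →
      0 ≤ (4*y^4+16*y^3+12*y^2-24*y+24)*(Real.exp y)^2 - 24*Real.exp y := by
    apply nonneg_of_hasDerivAt _
      (fun y => (8*y^4+48*y^3+72*y^2-24*y+24)*(Real.exp y)^2 - 24*Real.exp y)
    · intro x
      have hp : HasDerivAt (fun y : ℝ => 4*y^4+16*y^3+12*y^2-24*y+24)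
          (16*x^3+48*x^2+24*x-24) x := by
        have := ((((((hasDerivAt_pow 4 x).const_mul 4).add
          ((hasDerivAt_pow 3 x).const_mul 16)).add ((hasDerivAt_pow 2 x).const_mul 12)).sub
          ((hasDerivAt_id x).const_mul 24)).add_const 24)
        refine this.congr_deriv ?_
        (try simp only [id_eq, Pi.pow_apply]); push_cast; ring
      have h := (hp.mul ((Real.hasDerivAt_exp x).pow 2)).sub ((Real.hasDerivAt_exp x).const_mul 24)
      refine h.congr_deriv ?_
      (try simp only [id_eq, Pi.pow_apply]); push_cast; ring
    · norm_num
    · exact h3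
  have h1 : ∀ y, 0 ≤ y →
      0 ≤ (2*y^4+4*y^3-12*y+18)*(Real.exp y)^2 - 24*Real.exp y + 6 := by
    apply nonneg_of_hasDerivAt _
      (fun y => (4*y^4+16*y^3+12*y^2-24*y+24)*(Real.exp y)^2 - 24*Real.exp y)
    · intro x
      have hp : HasDerivAt (fun y : ℝ => 2*y^4+4*y^3-12*y+18)
          (8*x^3+12*x^2-12) x := by
        have := (((((hasDerivAt_pow 4 x).const_mul 2).add
          ((hasDerivAt_pow 3 x).const_mul 4)).sub
          ((hasDerivAt_id x).const_mul 12)).add_const 18)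
        refine this.congr_deriv ?_
        (try simp only [id_eq, Pi.pow_apply]); push_cast; ring
      have h := ((hp.mul ((Real.hasDerivAt_exp x).pow 2)).sub
        ((Real.hasDerivAt_exp x).const_mul 24)).add_const 6
      refine h.congr_deriv ?_
      (try simp only [id_eq, Pi.pow_apply]); push_cast; ring
    · norm_num
    · exact h2
  have h0 : ∀ y, 0 ≤ y →
      0 ≤ y^4*(Real.exp y)^2 - (6*y*((Real.exp y)^2-1) - 12*(Real.exp y-1)^2) := by
    apply nonneg_of_hasDerivAt _
      (fun y => (2*y^4+4*y^3-12*y+18)*(Real.exp y)^2 - 24*Real.exp y + 6)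
    · intro x
      have h := (((hasDerivAt_pow 4 x).mul ((Real.hasDerivAt_exp x).pow 2)).sub
        ((((hasDerivAt_id x).const_mul 6).mul
          (((Real.hasDerivAt_exp x).pow 2).sub_const 1)).sub
          ((((Real.hasDerivAt_exp x).sub_const 1).pow 2).const_mul 12)))
      refine h.congr_deriv ?_
      (try simp only [id_eq, Pi.pow_apply]); push_cast; ring
    · norm_num
    · exact h1
  linarith [h0 x hx]


lemma int_exp_mul (c ε : ℝ) (hc : c ≠ 0) :
    ∫ u in (0:ℝ)..ε, Real.exp (c*u) = (Real.exp (c*ε) - 1)/c := by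
  have h : ∀ u ∈ Set.uIcc (0:ℝ) ε, HasDerivAt (fun y => Real.exp (c*y)/c) (Real.exp (c*u)) u := by
    intro u _
    have := (((hasDerivAt_id u).const_mul c).exp).div_const c
    refine this.congr_deriv ?_
    field_simp
    rfl
  have hint : IntervalIntegrable (fun u => Real.exp (c*u)) MeasureTheory.volume 0 ε :=
    (Real.continuous_exp.comp (continuous_const.mul continuous_id)).intervalIntegrable 0 ε
  rw [intervalIntegral.integral_eq_sub_of_hasDerivAt h hint]
  simp [sub_div]

lemma var_int (a ε : ℝ) (ha : 0 < a) (hε : 0 < ε) :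
    ∫ s in (0:ℝ)..ε, (Real.exp (a*s) - (1/ε) * ∫ u in (0:ℝ)..ε, Real.exp (a*u))^2
      = (Real.exp (a*ε)^2 - 1)/(2*a) - (Real.exp (a*ε)-1)^2/(a^2*ε) := by
  set m : ℝ := (1/ε) * ∫ u in (0:ℝ)..ε, Real.exp (a*u) with hm
  have hI1 : ∫ u in (0:ℝ)..ε, Real.exp (a*u) = (Real.exp (a*ε) - 1)/a := int_exp_mul a ε ha.ne'
  have hI2 : ∫ u in (0:ℝ)..ε, Real.exp (2*a*u) = (Real.exp (2*a*ε) - 1)/(2*a) :=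
    int_exp_mul (2*a) ε (by positivity)
  have hexpand : ∀ s : ℝ, (Real.exp (a*s) - m)^2 = Real.exp (2*a*s) - 2*m*Real.exp (a*s) + m^2 := by
    intro s
    have : Real.exp (2*a*s) = Real.exp (a*s) * Real.exp (a*s) := by
      rw [← Real.exp_add]; ring_nf
    rw [this]; ring
  have c1 : Continuous fun s : ℝ => Real.exp (2*a*s) := by continuity
  have c2 : Continuous fun s : ℝ => 2*m*Real.exp (a*s) := by continuity
  rw [show (fun s => (Real.exp (a*s) - m)^2)
      = fun s => Real.exp (2*a*s) - 2*m*Real.exp (a*s) + m^2 from funext hexpand]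
  rw [intervalIntegral.integral_add (f := fun s => Real.exp (2*a*s) - 2*m*Real.exp (a*s))
      (g := fun _ => m^2) ((c1.sub c2).intervalIntegrable 0 ε)
      (intervalIntegrable_const),
    intervalIntegral.integral_sub (c1.intervalIntegrable 0 ε) (c2.intervalIntegrable 0 ε),
    intervalIntegral.integral_const_mul, hI1, hI2, intervalIntegral.integral_const]
  have h2 : Real.exp (2*a*ε) = Real.exp (a*ε)^2 := by
    rw [sq, ← Real.exp_add]; ring_nf
  rw [hm, hI1, h2]
  simp only [smul_eq_mul, sub_zero]
  field_simp
  ring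


lemma sum_geom_aux (a ε : ℝ) (n : ℕ) :
    ∑ k ∈ Finset.Icc 1 n, Real.exp (2*a*((n:ℝ) - (k:ℝ))*ε)
      = ∑ j ∈ Finset.range n, (Real.exp (2*a*ε))^j := by
  apply Finset.sum_nbij' (fun k => n - k) (fun j => n - j)
  · intro k hk
    simp only [Finset.mem_Icc] at hk
    simp only [Finset.mem_range]
    omega
  · intro j hj
    simp only [Finset.mem_range] at hj
    simp only [Finset.mem_Icc]
    omega
  · intro k hk
    simp only [Finset.mem_Icc] at hk
    omega
  · intro j hj
    simp only [Finset.mem_range] at hj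
    omega
  · intro k hk
    simp only [Finset.mem_Icc] at hk
    have hc : (n:ℝ) - (k:ℝ) = ((n-k : ℕ):ℝ) := by
      have h1 : n - k + k = n := by omega
      have := congrArg (fun m : ℕ => (m:ℝ)) h1
      push_cast at this
      linarith
    rw [hc, show 2*a*((n-k : ℕ):ℝ)*ε = ((n-k : ℕ):ℝ) * (2*a*ε) by ring, Real.exp_nat_mul]

lemma geom_aux (a ε : ℝ) (n : ℕ) :
    (Real.exp (2*a*ε) - 1) * ∑ k ∈ Finset.Icc 1 n, Real.exp (2*a*((n:ℝ) - (k:ℝ))*ε)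
      = Real.exp (2*a*(n:ℝ)*ε) - 1 := by
  rw [sum_geom_aux, mul_comm, geom_sum_mul, ← Real.exp_nat_mul]
  ring_nf

lemma core (a ε t u S q : ℝ) (ha : 0 < a) (hε : 0 < ε) (ht0 : 0 < t)
    (hP1 : (a*ε)^4 ≤ 6*(a*ε)*(t^2-1) - 12*(t-1)^2)
    (hP2 : 6*(a*ε)*(t^2-1) - 12*(t-1)^2 ≤ (a*ε)^4*t^2)
    (hu : u*t^2 = 1)
    (hQ1 : t^2 - 1 ≤ 2*(a*ε)*t^2) (hQ2 : 2*(a*ε) ≤ t^2 - 1)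
    (hS0 : 0 ≤ S) (hgeom : (t^2-1)*S = q - 1) :
    ε^2*(a/24)*u*(q-1) ≤ ((t^2-1)/(2*a) - (t-1)^2/(a^2*ε))*S
    ∧ ((t^2-1)/(2*a) - (t-1)^2/(a^2*ε))*S ≤ ε^2*(a/24)*t^2*(q-1) := by
  have hx : 0 < a*ε := mul_pos ha hε
  have hK : (0:ℝ) < 24*a^2*ε*t^2 := by positivity
  have hK2 : (0:ℝ) < 24*a^2*ε := by positivity
  have key_low : ε^2*(a/24)*u*(t^2-1) ≤ (t^2-1)/(2*a) - (t-1)^2/(a^2*ε) := by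
    rw [← mul_le_mul_iff_of_pos_right hK]
    have hDK : ((t^2-1)/(2*a) - (t-1)^2/(a^2*ε))*(24*a^2*ε*t^2)
        = t^2*(12*(a*ε)*(t^2-1) - 24*(t-1)^2) := by
      field_simp
      ring
    have hLK : (ε^2*(a/24)*u*(t^2-1))*(24*a^2*ε*t^2) = (a*ε)^3*(t^2-1)*(u*t^2) := by
      ring
    rw [hDK, hLK, hu, mul_one]
    nlinarith [mul_le_mul_of_nonneg_left hQ1 (pow_nonneg hx.le 3),
      mul_le_mul_of_nonneg_left hP1 (by positivity : (0:ℝ) ≤ 2*t^2)]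
  have key_high : (t^2-1)/(2*a) - (t-1)^2/(a^2*ε) ≤ ε^2*(a/24)*t^2*(t^2-1) := by
    rw [← mul_le_mul_iff_of_pos_right hK2]
    have hDK : ((t^2-1)/(2*a) - (t-1)^2/(a^2*ε))*(24*a^2*ε)
        = 12*(a*ε)*(t^2-1) - 24*(t-1)^2 := by
      field_simp
      ring
    have hRK : (ε^2*(a/24)*t^2*(t^2-1))*(24*a^2*ε) = (a*ε)^3*t^2*(t^2-1) := by
      ring
    rw [hDK, hRK]
    nlinarith [mul_le_mul_of_nonneg_left hQ2 (by positivity : (0:ℝ) ≤ (a*ε)^3*t^2),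
      mul_le_mul_of_nonneg_left hP2 (by norm_num : (0:ℝ) ≤ 2)]
  constructor
  · rw [← hgeom]
    calc ε^2*(a/24)*u*((t^2-1)*S) = (ε^2*(a/24)*u*(t^2-1))*S := by ring
    _ ≤ ((t^2-1)/(2*a) - (t-1)^2/(a^2*ε))*S := mul_le_mul_of_nonneg_right key_low hS0
  · rw [← hgeom]
    calc ((t^2-1)/(2*a) - (t-1)^2/(a^2*ε))*S
        ≤ (ε^2*(a/24)*t^2*(t^2-1))*S := mul_le_mul_of_nonneg_right key_high hS0
    _ = ε^2*(a/24)*t^2*((t^2-1)*S) := by ring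

theorem stmt_4 (a ε : ℝ) (ha : 0 < a) (hε : 0 < ε) (n : ℕ) (hn : 1 ≤ n) :
    ε^2 * (a/24) * Real.exp (-(2*a*ε)) * (Real.exp (2*a*(n:ℝ)*ε) - 1)
      ≤ ε * ((1/ε) * ∫ s in (0:ℝ)..ε,
            (Real.exp (a*s) - (1/ε) * ∫ u in (0:ℝ)..ε, Real.exp (a*u))^2)
          * ∑ k ∈ Finset.Icc 1 n, Real.exp (2*a*((n:ℝ) - (k:ℝ))*ε)
    ∧ ε * ((1/ε) * ∫ s in (0:ℝ)..ε,
            (Real.exp (a*s) - (1/ε) * ∫ u in (0:ℝ)..ε, Real.exp (a*u))^2)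
          * ∑ k ∈ Finset.Icc 1 n, Real.exp (2*a*((n:ℝ) - (k:ℝ))*ε)
      ≤ ε^2 * (a/24) * Real.exp (2*a*ε) * (Real.exp (2*a*(n:ℝ)*ε) - 1) := by
  have hx : 0 < a*ε := mul_pos ha hε
  have ht2 : Real.exp (2*a*ε) = Real.exp (a*ε)^2 := by
    rw [sq, ← Real.exp_add]; ring_nf
  rw [var_int a ε ha hε, ht2]
  have hsimp : ε * ((1/ε) * ((Real.exp (a*ε)^2 - 1)/(2*a) - (Real.exp (a*ε)-1)^2/(a^2*ε)))
      = (Real.exp (a*ε)^2 - 1)/(2*a) - (Real.exp (a*ε)-1)^2/(a^2*ε) := by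
    field_simp
  rw [hsimp]
  have hu : Real.exp (-(2*a*ε)) * Real.exp (a*ε)^2 = 1 := by
    rw [sq, ← Real.exp_add, ← Real.exp_add, show -(2*a*ε) + (a*ε + a*ε) = 0 by ring,
      Real.exp_zero]
  have hQ1 : Real.exp (a*ε)^2 - 1 ≤ 2*(a*ε)*Real.exp (a*ε)^2 := by
    have h := mul_le_mul_of_nonneg_right (Real.add_one_le_exp (-(2*a*ε)))
      (sq_nonneg (Real.exp (a*ε)))
    nlinarith [hu]
  have hQ2 : 2*(a*ε) ≤ Real.exp (a*ε)^2 - 1 := by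
    have h := Real.add_one_le_exp (2*a*ε)
    rw [ht2] at h
    linarith
  exact core a ε (Real.exp (a*ε)) (Real.exp (-(2*a*ε))) _ _ ha hε (Real.exp_pos _)
    (by have := P1 (a*ε) hx.le; linarith)
    (by have := P2 (a*ε) hx.le; linarith)
    hu hQ1 hQ2
    (Finset.sum_nonneg fun k _ => (Real.exp_pos _).le)
    (by rw [← ht2]; exact geom_aux a ε n)
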